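/- For the symmetric matrix pencil A(x) = [[x₀,0,x₁,x₂],[0,x₀,x₂,x₃],[x₁,x₂,x₄,0],[x₂,x₃,0,x₄]], the quartic hypersurface det A(x) = 0 in ℙ⁴ is singular along the quadratic surface V(x₁ + x₃, x₀x₄ − x₂² − x₃²): det A and all its partial derivatives vanish whenever x₁ = −x₃ and x₀x₄ = x₂² + x₃². -/

import Mathlib

open MvPolynomial Matrix

/-- The symmetric matrix pencil `A(x) = [[x₀,0,x₁,x₂],[0,x₀,x₂,x₃],[x₁,x₂,x₄,0],[x₂,x₃,0,x₄]]`. -/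
noncomputable def pencilB : Matrix (Fin 4) (Fin 4) (MvPolynomial (Fin 5) ℂ) :=
  !![X 0, 0, X 1, X 2;
     0, X 0, X 2, X 3;
     X 1, X 2, X 4, 0;
     X 2, X 3, 0, X 4]

lemma pencilB_det : pencilB.det =
    X 0^2 * X 4^2 - 2 * X 0 * X 2^2 * X 4 - X 0 * X 3^2 * X 4 - X 0 * X 1^2 * X 4
      + X 1^2 * X 3^2 - 2 * X 1 * X 2^2 * X 3 + X 2^4 := by
  simp [pencilB, Matrix.det_succ_row_zero, Fin.sum_univ_succ,
    show ((2:Fin 3).succAbove 2) = 3 from rfl, show (Fin.castSucc (2:Fin 3)) = 2 from rfl,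
    show ((2:Fin 4).succAbove (2:Fin 3)) = 3 from rfl, show ((3:Fin 4).succAbove (2:Fin 3)) = 2 from rfl]
  ring

lemma pderiv_two (i : Fin 5) : pderiv i (2 : MvPolynomial (Fin 5) ℂ) = 0 := by
  rw [show (2 : MvPolynomial (Fin 5) ℂ) = ((2 : ℕ) : MvPolynomial (Fin 5) ℂ) by norm_num]
  exact Derivation.map_natCast _ 2

/-- The quartic `det A(x) = 0` in `ℙ⁴` is singular along the quadratic surface
`V(x₁ + x₃, x₀x₄ − x₂² − x₃²)`. -/
theorem symmetroid_singular_along_quadric' (x : Fin 5 → ℂ)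
    (h1 : x 1 = -(x 3)) (hq : x 0 * x 4 = x 2 ^ 2 + x 3 ^ 2) :
    eval x pencilB.det = 0 ∧ ∀ i : Fin 5, eval x (pderiv i pencilB.det) = 0 := by
  constructor
  · simp [pencilB_det, h1]
    linear_combination (x 0 * x 4 - x 2 ^ 2 - x 3 ^ 2) * hq
  · intro i
    fin_cases i <;> simp [pencilB_det, pderiv_X, h1, pderiv_two]
    · linear_combination (2 * x 4) * hq
    · linear_combination (2 * x 3) * hq
    · linear_combination (-4 * x 2) * hq
    · linear_combination (-2 * x 3) * hq
    · linear_combination (2 * x 0) * hq
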